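/- Let P = (P, ≤_P) be a partial order, let φ be a parsimonious set representation of P, and suppose p₀, p₁ ∈ P are distinct elements with α_φ(p₀) = α_φ(p₁). For i ∈ {0,1} let I_i be the set of all p <_P p_i that are ≤_P-incomparable with p_{1−i}. Then I₀ ∪ {p₀} and I₁ ∪ {p₁} are parallel bouquets in P (with respective maxima p₀ and p₁) that are not skewly topped. -/
import Mathlib


namespace SatOrder

variable {α Q : Type}

/-- A set representation of a partial order: an injective map into sets such that
`p < p'` iff `φ p ⊊ φ p'`. -/
def IsSetRep [PartialOrder α] (φ : α → Set Q) : Prop :=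
  Function.Injective φ ∧ ∀ p p' : α, p < p' ↔ φ p ⊂ φ p'

/-- The residual set `φ p − ⋃_{p' < p} φ p'`. -/
def resid [PartialOrder α] (φ : α → Set Q) (p : α) : Set Q :=
  φ p \ ⋃ p' ∈ {x : α | x < p}, φ p'

/-- A parsimonious set representation: every residual is a singleton, and every element of `φ p`
is the residual element of some `p' ≤ p`. -/
def IsParsimonious [PartialOrder α] (φ : α → Set Q) : Prop :=
  IsSetRep φ ∧ (∀ p : α, ∃ q : Q, resid φ p = {q}) ∧
    (∀ p : α, ∀ q ∈ φ p, ∃ p' : α, p' ≤ p ∧ resid φ p' = {q})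

/-- `a` is the map `α_φ`, i.e. `{a p} = φ p − ⋃_{p' < p} φ p'` for all `p`. -/
def IsAlpha [PartialOrder α] (φ : α → Set Q) (a : α → Q) : Prop :=
  ∀ p : α, resid φ p = {a p}

/-- A partial order is saturated if `α_φ` is injective for every parsimonious
set representation `φ`. -/
def IsSaturated (α : Type) [PartialOrder α] : Prop :=
  ∀ (Q : Type) (φ : α → Set Q), IsParsimonious φ →
    ∀ a : α → Q, IsAlpha φ a → Function.Injective a

/-- A bouquet with maximum `m`: a set with at least two elements whose maximum is `m`. -/
def IsBouquet [PartialOrder α] (B : Set α) (m : α) : Prop :=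
  B.Nontrivial ∧ m ∈ B ∧ ∀ b ∈ B, b ≤ m

/-- A fan: a bouquet such that no two distinct elements of `F − {max F}` are comparable. -/
def IsFan [PartialOrder α] (F : Set α) (m : α) : Prop :=
  IsBouquet F m ∧ ∀ b ∈ F \ {m}, ∀ b' ∈ F \ {m}, b ≤ b' → b = b'

/-- Two sets are parallel if no element of one is comparable with any element of the other. -/
def ParallelB [PartialOrder α] (B₀ B₁ : Set α) : Prop :=
  ∀ b₀ ∈ B₀, ∀ b₁ ∈ B₁, ¬ b₀ ≤ b₁ ∧ ¬ b₁ ≤ b₀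

/-- `m` skewly tops `B₀, B₁` (with maxima `m₀, m₁`). -/
def SkewlyTops [PartialOrder α] (m : α) (B₀ B₁ : Set α) (m₀ m₁ : α) : Prop :=
  (m₀ ≤ m ∧ ¬ m₁ ≤ m ∧ ∀ p ∈ B₁ \ {m₁}, p ≤ m) ∨
  (m₁ ≤ m ∧ ¬ m₀ ≤ m ∧ ∀ p ∈ B₀ \ {m₀}, p ≤ m)

/-- `B₀` and `B₁` (with maxima `m₀, m₁`) are skewly topped. -/
def SkewlyTopped [PartialOrder α] (B₀ B₁ : Set α) (m₀ m₁ : α) : Prop :=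
  ∃ m : α, SkewlyTops m B₀ B₁ m₀ m₁

section Aux

variable [PartialOrder α] {φ : α → Set Q} {a : α → Q}

lemma le_iff_sub (h : IsSetRep φ) {p p' : α} : p ≤ p' ↔ φ p ⊆ φ p' := by
  constructor
  · intro hle
    rcases eq_or_lt_of_le hle with rfl | hlt
    · exact le_refl _
    · exact ((h.2 p p').1 hlt).subset
  · intro hs
    rcases eq_or_ssubset_of_subset hs with heq | hss
    · exact le_of_eq (h.1 heq)
    · exact le_of_lt ((h.2 p p').2 hss)

lemma mem_resid_iff {p : α} {x : Q} :
    x ∈ resid φ p ↔ x ∈ φ p ∧ ∀ p' : α, p' < p → x ∉ φ p' := by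
  simp [resid, Set.mem_diff, Set.mem_iUnion]

lemma alpha_mem (ha : IsAlpha φ a) (p : α) : a p ∈ φ p := by
  have : a p ∈ resid φ p := by rw [ha p]; rfl
  exact (mem_resid_iff.mp this).1

lemma alpha_not_mem (ha : IsAlpha φ a) {p p' : α} (h : p' < p) : a p ∉ φ p' := by
  have : a p ∈ resid φ p := by rw [ha p]; rfl
  exact (mem_resid_iff.mp this).2 p' h

/-- If `x ∈ φ p` and `x ≠ a p` then `x ∈ φ p'` for some `p' < p`. -/
lemma exists_lt_of_mem (ha : IsAlpha φ a) {p : α} {x : Q} (hx : x ∈ φ p) (hne : x ≠ a p) :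
    ∃ p' : α, p' < p ∧ x ∈ φ p' := by
  have hnr : x ∉ resid φ p := by rw [ha p]; simpa using hne
  by_contra hcon
  push_neg at hcon
  exact hnr (mem_resid_iff.mpr ⟨hx, fun p' h' hm => hcon p' h' hm⟩)

/-- The set `I₀` of `p < p₀` incomparable with `p₁` is nonempty. -/
lemma exists_incomp (hφ : IsParsimonious φ) (ha : IsAlpha φ a) {p₀ p₁ : α}
    (heq : a p₀ = a p₁) (h01 : ¬ p₀ ≤ p₁) (h10 : ¬ p₁ ≤ p₀) :
    ∃ w : α, w < p₀ ∧ ¬ w ≤ p₁ ∧ ¬ p₁ ≤ w := by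
  by_contra hcon
  push_neg at hcon
  apply h01
  rw [le_iff_sub hφ.1]
  intro x hx
  by_cases hxa : x = a p₀
  · rw [hxa, heq]; exact alpha_mem ha p₁
  · obtain ⟨p', hlt, hmem⟩ := exists_lt_of_mem ha hx hxa
    by_cases hle : p' ≤ p₁
    · exact (le_iff_sub hφ.1).mp hle hmem
    · have h1p : p₁ ≤ p' := hcon p' hlt hle
      exact absurd (h1p.trans hlt.le) h10

/-- Key lemma for "not skewly topped". -/
lemma le_of_tops (hφ : IsParsimonious φ) (ha : IsAlpha φ a) {p₀ p₁ m : α}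
    (heq : a p₀ = a p₁) (h01 : ¬ p₀ ≤ p₁)
    (hm0 : p₀ ≤ m) (hm : ∀ p : α, p < p₁ → ¬ p ≤ p₀ → ¬ p₀ ≤ p → p ≤ m) :
    p₁ ≤ m := by
  rw [le_iff_sub hφ.1]
  intro x hx
  obtain ⟨p', hp'le, hres⟩ := hφ.2.2 p₁ x hx
  have hxa : x = a p' := by
    have := ha p'
    rw [hres] at this
    exact (Set.singleton_eq_singleton_iff.mp this)
  rcases eq_or_lt_of_le hp'le with rfl | hlt
  · rw [hxa, ← heq]
    exact (le_iff_sub hφ.1).mp hm0 (alpha_mem ha p₀)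
  · have hmem : x ∈ φ p' := hxa ▸ alpha_mem ha p'
    by_cases hle : p' ≤ p₀
    · exact (le_iff_sub hφ.1).mp (hle.trans hm0) hmem
    · by_cases hle' : p₀ ≤ p'
      · exact absurd (hle'.trans hlt.le) h01
      · exact (le_iff_sub hφ.1).mp (hm p' hlt hle hle') hmem

end Aux

/-- If `φ` is parsimonious and `p₀ ≠ p₁` with `α_φ p₀ = α_φ p₁`, then
`I₀ ∪ {p₀}` and `I₁ ∪ {p₁}` are parallel bouquets (with maxima `p₀, p₁`) that are not
skewly topped, where `I_i` consists of the `p < p_i` incomparable with `p_{1-i}`. -/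
theorem parallel_bouquets_not_topped_of_alpha_eq {α Q : Type} [PartialOrder α]
    (φ : α → Set Q) (hφ : IsParsimonious φ) (a : α → Q) (ha : IsAlpha φ a)
    (p₀ p₁ : α) (hne : p₀ ≠ p₁) (heq : a p₀ = a p₁) :
    letI I₀ : Set α := {p : α | p < p₀ ∧ ¬ p ≤ p₁ ∧ ¬ p₁ ≤ p}
    letI I₁ : Set α := {p : α | p < p₁ ∧ ¬ p ≤ p₀ ∧ ¬ p₀ ≤ p}
    IsBouquet (I₀ ∪ {p₀}) p₀ ∧ IsBouquet (I₁ ∪ {p₁}) p₁ ∧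
      ParallelB (I₀ ∪ {p₀}) (I₁ ∪ {p₁}) ∧
      ¬ SkewlyTopped (I₀ ∪ {p₀}) (I₁ ∪ {p₁}) p₀ p₁ := by
  -- p₀ and p₁ are incomparable
  have h01 : ¬ p₀ ≤ p₁ := by
    intro h
    exact alpha_not_mem ha (lt_of_le_of_ne h hne) (heq ▸ alpha_mem ha p₀)
  have h10 : ¬ p₁ ≤ p₀ := by
    intro h
    exact alpha_not_mem ha (lt_of_le_of_ne h (Ne.symm hne)) (heq ▸ alpha_mem ha p₁)
  obtain ⟨w₀, hw₀⟩ := exists_incomp hφ ha heq h01 h10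
  obtain ⟨w₁, hw₁⟩ := exists_incomp hφ ha heq.symm h10 h01
  have hB₀ : IsBouquet ({p : α | p < p₀ ∧ ¬ p ≤ p₁ ∧ ¬ p₁ ≤ p} ∪ {p₀}) p₀ := by
    refine ⟨⟨w₀, Or.inl hw₀, p₀, Or.inr rfl, hw₀.1.ne⟩, Or.inr rfl, ?_⟩
    rintro b (hb | rfl)
    · exact hb.1.le
    · exact le_refl _
  have hB₁ : IsBouquet ({p : α | p < p₁ ∧ ¬ p ≤ p₀ ∧ ¬ p₀ ≤ p} ∪ {p₁}) p₁ := by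
    refine ⟨⟨w₁, Or.inl hw₁, p₁, Or.inr rfl, hw₁.1.ne⟩, Or.inr rfl, ?_⟩
    rintro b (hb | rfl)
    · exact hb.1.le
    · exact le_refl _
  refine ⟨hB₀, hB₁, ?_, ?_⟩
  · -- parallel
    rintro b₀ (hb₀ | rfl) b₁ (hb₁ | rfl)
    · constructor
      · intro h; exact hb₀.2.1 (h.trans hb₁.1.le)
      · intro h; exact hb₁.2.1 (h.trans hb₀.1.le)
    · exact ⟨hb₀.2.1, hb₀.2.2⟩
    · exact ⟨fun h => hb₁.2.2 h, fun h => hb₁.2.1 h⟩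
    · exact ⟨h01, h10⟩
  · -- not skewly topped
    rintro ⟨m, hm⟩
    rcases hm with ⟨hm0, hm1, htop⟩ | ⟨hm1, hm0, htop⟩
    · apply hm1
      refine le_of_tops hφ ha heq h01 hm0 ?_
      intro p hlt hle hle'
      exact htop p ⟨Or.inl ⟨hlt, hle, hle'⟩, fun h => hlt.ne (by simpa using h)⟩
    · apply hm0
      refine le_of_tops hφ ha heq.symm h10 hm1 ?_
      intro p hlt hle hle'
      exact htop p ⟨Or.inl ⟨hlt, hle, hle'⟩, fun h => hlt.ne (by simpa using h)⟩

end SatOrder
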